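/- Let l > 0, c > 0, γ₁ ∈ ℝ, γ₂ ≥ 0, γ₃ ≥ 0. Let τ : [0,l] → ℝ be twice continuously differentiable with τ(0) = 0 and τ(l) = 0. Let P, Q : [0,l] × [0,l] → ℝ be continuous, let P₁, Q₁ : [0,l] → ℝ be continuous, and assume that for all x, z ∈ [0,l]: ∂P/∂z(x,z) = −P₁(x)P₁(z), ∂Q/∂z(x,z) = −Q₁(x)Q₁(z), P(x,x) ≥ 0 and Q(x,x) ≤ 0. If for every x ∈ (0,l) one has c · τ''(x) = γ₁ τ'(x) + γ₂ ∫_0^x τ'(z) P(x,z) dz + γ₃ ∫_x^l τ'(z) Q(x,z) dz, then τ(x) = 0 for every x ∈ [0,l]. -/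

import Mathlib

open Real Set intervalIntegral

open MeasureTheory

/-- FTC wrapper: continuous `f` on `[a,b]` with derivative `f'` at interior points,
`f'` continuous on `[a,b]`. -/
lemma my_ftc {f f' : ℝ → ℝ} {a b : ℝ} (hab : a ≤ b)
    (hf : ContinuousOn f (Icc a b))
    (hd : ∀ x ∈ Ioo a b, HasDerivAt f (f' x) x)
    (hf' : ContinuousOn f' (Icc a b)) :
    ∫ y in a..b, f' y = f b - f a := by
  apply intervalIntegral.integral_eq_sub_of_hasDeriv_right_of_le hab hf
    (fun x hx => (hd x hx).hasDerivWithinAt)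
  apply ContinuousOn.intervalIntegrable
  rwa [uIcc_of_le hab]

theorem trace_uniqueness_homogeneous
    (l c γ₁ γ₂ γ₃ : ℝ) (hl : 0 < l) (hc : 0 < c) (hγ₂ : 0 ≤ γ₂) (hγ₃ : 0 ≤ γ₃)
    (τ τ' τ'' : ℝ → ℝ)
    (hτ' : ∀ x ∈ Icc (0 : ℝ) l, HasDerivWithinAt τ (τ' x) (Icc 0 l) x)
    (hτ'' : ∀ x ∈ Icc (0 : ℝ) l, HasDerivWithinAt τ' (τ'' x) (Icc 0 l) x)
    (hτ''cont : ContinuousOn τ'' (Icc 0 l))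
    (h0 : τ 0 = 0) (hτl : τ l = 0)
    (P Q : ℝ → ℝ → ℝ) (P₁ Q₁ : ℝ → ℝ)
    (hPcont : ContinuousOn (fun p : ℝ × ℝ => P p.1 p.2) (Icc 0 l ×ˢ Icc 0 l))
    (hQcont : ContinuousOn (fun p : ℝ × ℝ => Q p.1 p.2) (Icc 0 l ×ˢ Icc 0 l))
    (hP₁ : ContinuousOn P₁ (Icc 0 l)) (hQ₁ : ContinuousOn Q₁ (Icc 0 l))
    (hPz : ∀ x ∈ Icc (0 : ℝ) l, ∀ z ∈ Icc (0 : ℝ) l,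
      HasDerivWithinAt (fun z' => P x z') (-(P₁ x * P₁ z)) (Icc 0 l) z)
    (hQz : ∀ x ∈ Icc (0 : ℝ) l, ∀ z ∈ Icc (0 : ℝ) l,
      HasDerivWithinAt (fun z' => Q x z') (-(Q₁ x * Q₁ z)) (Icc 0 l) z)
    (hPdiag : ∀ x ∈ Icc (0 : ℝ) l, 0 ≤ P x x)
    (hQdiag : ∀ x ∈ Icc (0 : ℝ) l, Q x x ≤ 0)
    (heq : ∀ x ∈ Ioo (0 : ℝ) l,
      c * τ'' x = γ₁ * τ' x + γ₂ * (∫ z in (0 : ℝ)..x, τ' z * P x z) +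
        γ₃ * ∫ z in x..l, τ' z * Q x z) :
    ∀ x ∈ Icc (0 : ℝ) l, τ x = 0 := by
  have hll : (0:ℝ) ≤ l := hl.le
  have hτc : ContinuousOn τ (Icc 0 l) := fun x hx => (hτ' x hx).continuousWithinAt
  have hτ'c : ContinuousOn τ' (Icc 0 l) := fun x hx => (hτ'' x hx).continuousWithinAt
  have hτat : ∀ x ∈ Ioo (0:ℝ) l, HasDerivAt τ (τ' x) x := fun x hx =>
    (hτ' x (Ioo_subset_Icc_self hx)).hasDerivAt (Icc_mem_nhds hx.1 hx.2)
  have hτ'at : ∀ x ∈ Ioo (0:ℝ) l, HasDerivAt τ' (τ'' x) x := fun x hx =>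
    (hτ'' x (Ioo_subset_Icc_self hx)).hasDerivAt (Icc_mem_nhds hx.1 hx.2)
  have intCO : ∀ {f : ℝ → ℝ}, ContinuousOn f (Icc 0 l) → IntervalIntegrable f volume 0 l :=
    fun {f} hf => ContinuousOn.intervalIntegrable (by rwa [uIcc_of_le hll])
  -- continuous extensions of τ*P₁ and τ*Q₁
  set g : ℝ → ℝ := IccExtend hll ((Icc (0:ℝ) l).restrict (fun y => τ y * P₁ y)) with hg_def
  set h : ℝ → ℝ := IccExtend hll ((Icc (0:ℝ) l).restrict (fun y => τ y * Q₁ y)) with hh_def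
  have hgc : Continuous g := Continuous.Icc_extend' (ContinuousOn.restrict (hτc.mul hP₁))
  have hhc : Continuous h := Continuous.Icc_extend' (ContinuousOn.restrict (hτc.mul hQ₁))
  have hg_eq : ∀ y ∈ Icc (0:ℝ) l, g y = τ y * P₁ y := fun y hy => by
    simp only [hg_def, IccExtend_of_mem hll _ hy, Set.restrict_apply]; rfl
  have hh_eq : ∀ y ∈ Icc (0:ℝ) l, h y = τ y * Q₁ y := fun y hy => by
    simp only [hh_def, IccExtend_of_mem hll _ hy, Set.restrict_apply]; rfl
  -- primitives
  set F : ℝ → ℝ := fun x => ∫ z in (0:ℝ)..x, g z with hF_def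
  set G : ℝ → ℝ := fun x => ∫ z in x..l, h z with hG_def
  have hF' : ∀ x : ℝ, HasDerivAt F (g x) x := fun x =>
    (hgc.integral_hasStrictDerivAt 0 x).hasDerivAt
  have hG_alt : ∀ y : ℝ, G y = (∫ z in (0:ℝ)..l, h z) - ∫ z in (0:ℝ)..y, h z := by
    intro y
    have h2 := intervalIntegral.integral_add_adjacent_intervals
      (hhc.intervalIntegrable (μ := volume) 0 y) (hhc.intervalIntegrable (μ := volume) y l)
    simp only [hG_def]; linarith
  have hG' : ∀ x : ℝ, HasDerivAt G (-(h x)) x := by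
    intro x
    have h3 : HasDerivAt (fun y => (∫ z in (0:ℝ)..l, h z) - ∫ z in (0:ℝ)..y, h z) (-(h x)) x :=
      HasDerivAt.const_sub _ ((hhc.integral_hasStrictDerivAt 0 x).hasDerivAt)
    exact h3.congr_of_eventuallyEq (Filter.Eventually.of_forall hG_alt)
  have hFc : Continuous F := by
    rw [continuous_iff_continuousAt]; exact fun x => (hF' x).continuousAt
  have hGc : Continuous G := by
    rw [continuous_iff_continuousAt]; exact fun x => (hG' x).continuousAt
  -- diagonal continuity
  have hPdc : ContinuousOn (fun x => P x x) (Icc 0 l) :=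
    hPcont.comp (continuous_id.prodMk continuous_id).continuousOn
      (fun x hx => mk_mem_prod hx hx)
  have hQdc : ContinuousOn (fun x => Q x x) (Icc 0 l) :=
    hQcont.comp (continuous_id.prodMk continuous_id).continuousOn
      (fun x hx => mk_mem_prod hx hx)
  -- Step C : rewrite the P-integral
  have hC : ∀ x ∈ Icc (0:ℝ) l,
      (∫ z in (0:ℝ)..x, τ' z * P x z) = τ x * P x x + P₁ x * F x := by
    intro x hx
    have hsub : Icc (0:ℝ) x ⊆ Icc 0 l := Icc_subset_Icc le_rfl hx.2
    have hPxc : ContinuousOn (fun z => P x z) (Icc 0 l) :=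
      hPcont.comp (continuous_const.prodMk continuous_id).continuousOn
        (fun z hz => mk_mem_prod hx hz)
    have hioo : Ioo (0:ℝ) x ⊆ Ioo 0 l := Ioo_subset_Ioo le_rfl hx.2
    have hftc : ∫ z in (0:ℝ)..x, (τ' z * P x z + τ z * (-(P₁ x * P₁ z))) =
        τ x * P x x - τ 0 * P x 0 := by
      apply my_ftc hx.1 ((hτc.mono hsub).mul (hPxc.mono hsub))
      · intro z hz
        have hz' : z ∈ Icc (0:ℝ) l := Ioo_subset_Icc_self (hioo hz)
        exact (hτat z (hioo hz)).mul
          ((hPz x hx z hz').hasDerivAt (Icc_mem_nhds (hioo hz).1 (hioo hz).2))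
      · exact ((hτ'c.mono hsub).mul (hPxc.mono hsub)).add
          ((hτc.mono hsub).mul ((continuousOn_const.mul (hP₁.mono hsub)).neg))
    have hi1 : IntervalIntegrable (fun z => τ' z * P x z) volume 0 x := by
      apply ContinuousOn.intervalIntegrable
      rw [uIcc_of_le hx.1]
      exact (hτ'c.mono hsub).mul (hPxc.mono hsub)
    have hi2 : IntervalIntegrable (fun z => τ z * (-(P₁ x * P₁ z))) volume 0 x := by
      apply ContinuousOn.intervalIntegrable
      rw [uIcc_of_le hx.1]
      exact (hτc.mono hsub).mul ((continuousOn_const.mul (hP₁.mono hsub)).neg)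
    rw [intervalIntegral.integral_add hi1 hi2] at hftc
    have h4 : (∫ z in (0:ℝ)..x, τ z * (-(P₁ x * P₁ z))) = -P₁ x * F x := by
      have h5 : (∫ z in (0:ℝ)..x, τ z * (-(P₁ x * P₁ z))) =
          ∫ z in (0:ℝ)..x, -P₁ x * g z := by
        apply intervalIntegral.integral_congr
        intro z hz
        rw [uIcc_of_le hx.1] at hz
        simp only [hg_eq z (hsub hz)]
        ring
      rw [h5, intervalIntegral.integral_const_mul]
    rw [h4, h0] at hftc
    linarith
  -- Step D : rewrite the Q-integral
  have hD : ∀ x ∈ Icc (0:ℝ) l,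
      (∫ z in x..l, τ' z * Q x z) = -(τ x * Q x x) + Q₁ x * G x := by
    intro x hx
    have hsub : Icc x l ⊆ Icc 0 l := Icc_subset_Icc hx.1 le_rfl
    have hQxc : ContinuousOn (fun z => Q x z) (Icc 0 l) :=
      hQcont.comp (continuous_const.prodMk continuous_id).continuousOn
        (fun z hz => mk_mem_prod hx hz)
    have hioo : Ioo x l ⊆ Ioo 0 l := Ioo_subset_Ioo hx.1 le_rfl
    have hftc : ∫ z in x..l, (τ' z * Q x z + τ z * (-(Q₁ x * Q₁ z))) =
        τ l * Q x l - τ x * Q x x := by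
      apply my_ftc hx.2 ((hτc.mono hsub).mul (hQxc.mono hsub))
      · intro z hz
        have hz' : z ∈ Icc (0:ℝ) l := Ioo_subset_Icc_self (hioo hz)
        exact (hτat z (hioo hz)).mul
          ((hQz x hx z hz').hasDerivAt (Icc_mem_nhds (hioo hz).1 (hioo hz).2))
      · exact ((hτ'c.mono hsub).mul (hQxc.mono hsub)).add
          ((hτc.mono hsub).mul ((continuousOn_const.mul (hQ₁.mono hsub)).neg))
    have hi1 : IntervalIntegrable (fun z => τ' z * Q x z) volume x l := by
      apply ContinuousOn.intervalIntegrable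
      rw [uIcc_of_le hx.2]
      exact (hτ'c.mono hsub).mul (hQxc.mono hsub)
    have hi2 : IntervalIntegrable (fun z => τ z * (-(Q₁ x * Q₁ z))) volume x l := by
      apply ContinuousOn.intervalIntegrable
      rw [uIcc_of_le hx.2]
      exact (hτc.mono hsub).mul ((continuousOn_const.mul (hQ₁.mono hsub)).neg)
    rw [intervalIntegral.integral_add hi1 hi2] at hftc
    have h4 : (∫ z in x..l, τ z * (-(Q₁ x * Q₁ z))) = -Q₁ x * G x := by
      have h5 : (∫ z in x..l, τ z * (-(Q₁ x * Q₁ z))) =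
          ∫ z in x..l, -Q₁ x * h z := by
        apply intervalIntegral.integral_congr
        intro z hz
        rw [uIcc_of_le hx.2] at hz
        simp only [hh_eq z (hsub hz)]
        ring
      rw [h5, intervalIntegral.integral_const_mul]
    rw [h4, hτl] at hftc
    linarith
  -- master pointwise identity on Ioo
  have hmaster : ∀ x ∈ Ioo (0:ℝ) l,
      τ x * (c * τ'' x) =
        γ₁ * (τ x * τ' x) + γ₂ * (τ x ^ 2 * P x x + g x * F x) +
          γ₃ * (τ x ^ 2 * (-(Q x x)) + h x * G x) := by
    intro x hx
    have hx' : x ∈ Icc (0:ℝ) l := Ioo_subset_Icc_self hx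
    have e1 := heq x hx
    rw [hC x hx', hD x hx'] at e1
    have e2 : τ x * (c * τ'' x) = τ x * (γ₁ * τ' x + γ₂ * (τ x * P x x + P₁ x * F x) +
        γ₃ * (-(τ x * Q x x) + Q₁ x * G x)) := by rw [← e1]
    rw [e2, hg_eq x hx', hh_eq x hx']; ring
  -- interval integrability of all pieces
  have iττ' : IntervalIntegrable (fun x => τ x * τ' x) volume 0 l := intCO (hτc.mul hτ'c)
  have iA : IntervalIntegrable (fun x => τ x ^ 2 * P x x) volume 0 l :=
    intCO ((hτc.pow 2).mul hPdc)
  have iB : IntervalIntegrable (fun x => τ x ^ 2 * (-(Q x x))) volume 0 l :=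
    intCO ((hτc.pow 2).mul hQdc.neg)
  have iSP : IntervalIntegrable (fun x => g x * F x) volume 0 l :=
    (hgc.mul hFc).intervalIntegrable 0 l
  have iSQ : IntervalIntegrable (fun x => h x * G x) volume 0 l :=
    (hhc.mul hGc).intervalIntegrable 0 l
  -- integrate the master identity
  have hint_eq : (∫ x in (0:ℝ)..l, τ x * (c * τ'' x)) =
      ∫ x in (0:ℝ)..l, (γ₁ * (τ x * τ' x) + γ₂ * (τ x ^ 2 * P x x + g x * F x) +
        γ₃ * (τ x ^ 2 * (-(Q x x)) + h x * G x)) := by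
    apply intervalIntegral.integral_congr_ae
    rw [uIoc_of_le hll]
    filter_upwards [compl_mem_ae_iff.mpr (volume_singleton (a := l))] with x hxl hx
    exact hmaster x ⟨hx.1, lt_of_le_of_ne hx.2 (fun hxx => hxl hxx)⟩
  -- left-hand side: ∫ τ (c τ'') = -(c E)
  set E : ℝ := ∫ x in (0:ℝ)..l, τ' x * τ' x with hE_def
  have hIBP : (∫ x in (0:ℝ)..l, (τ' x * τ' x + τ x * τ'' x)) = 0 := by
    have h6 := my_ftc (f := fun x => τ x * τ' x) (f' := fun x => τ' x * τ' x + τ x * τ'' x) hll (hτc.mul hτ'c)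
      (fun x hx => ((hτat x hx).mul (hτ'at x hx)).congr_deriv (by ring))
      ((hτ'c.mul hτ'c).add (hτc.mul hτ''cont))
    rw [h6, h0, hτl]; ring
  have iτ'τ' : IntervalIntegrable (fun x => τ' x * τ' x) volume 0 l := intCO (hτ'c.mul hτ'c)
  have iττ'' : IntervalIntegrable (fun x => τ x * τ'' x) volume 0 l := intCO (hτc.mul hτ''cont)
  have hLHS : (∫ x in (0:ℝ)..l, τ x * (c * τ'' x)) = -(c * E) := by
    have h6 : (∫ x in (0:ℝ)..l, τ x * (c * τ'' x)) = c * ∫ x in (0:ℝ)..l, τ x * τ'' x := by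
      rw [← intervalIntegral.integral_const_mul]
      apply intervalIntegral.integral_congr; intro z _; ring
    have hsplit := intervalIntegral.integral_add iτ'τ' iττ''
    rw [hIBP] at hsplit
    rw [h6, hE_def]
    nlinarith [hsplit]
  -- the elementary integrals
  have hI1 : (∫ x in (0:ℝ)..l, τ x * τ' x) = 0 := by
    have h8 : (∫ x in (0:ℝ)..l, (τ x * τ' x + τ x * τ' x)) = τ l * τ l - τ 0 * τ 0 :=
      my_ftc hll (hτc.mul hτc)
        (fun x hx => ((hτat x hx).mul (hτat x hx)).congr_deriv (by ring))
        ((hτc.mul hτ'c).add (hτc.mul hτ'c))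
    rw [intervalIntegral.integral_add iττ' iττ', h0, hτl] at h8
    linarith
  have hSP : (∫ x in (0:ℝ)..l, g x * F x) = F l * F l / 2 := by
    have h9 : (∫ x in (0:ℝ)..l, g x * F x) = F l * F l / 2 - F 0 * F 0 / 2 :=
      my_ftc hll ((hFc.mul hFc).div_const 2).continuousOn
        (fun x _ => (((hF' x).mul (hF' x)).div_const 2).congr_deriv (by ring))
        ((hgc.mul hFc).continuousOn)
    have hF0 : F 0 = 0 := intervalIntegral.integral_same
    rw [h9, hF0]; ring
  have hSQ : (∫ x in (0:ℝ)..l, h x * G x) = G 0 * G 0 / 2 := by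
    have h9 : (∫ x in (0:ℝ)..l, h x * G x) = -(G l * G l / 2) - -(G 0 * G 0 / 2) :=
      my_ftc hll (((hGc.mul hGc).div_const 2).neg.continuousOn)
        (fun x _ => ((((hG' x).mul (hG' x)).div_const 2).neg).congr_deriv (by ring))
        ((hhc.mul hGc).continuousOn)
    have hGl : G l = 0 := intervalIntegral.integral_same
    rw [h9, hGl]; ring
  have hA : 0 ≤ ∫ x in (0:ℝ)..l, τ x ^ 2 * P x x :=
    intervalIntegral.integral_nonneg hll
      (fun u hu => mul_nonneg (sq_nonneg _) (hPdiag u hu))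
  have hB : 0 ≤ ∫ x in (0:ℝ)..l, τ x ^ 2 * (-(Q x x)) :=
    intervalIntegral.integral_nonneg hll
      (fun u hu => mul_nonneg (sq_nonneg _) (neg_nonneg.mpr (hQdiag u hu)))
  -- split the right-hand side
  have hsplitR : (∫ x in (0:ℝ)..l, (γ₁ * (τ x * τ' x) + γ₂ * (τ x ^ 2 * P x x + g x * F x) +
      γ₃ * (τ x ^ 2 * (-(Q x x)) + h x * G x))) =
      γ₁ * (∫ x in (0:ℝ)..l, τ x * τ' x) +
      γ₂ * ((∫ x in (0:ℝ)..l, τ x ^ 2 * P x x) + ∫ x in (0:ℝ)..l, g x * F x) +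
      γ₃ * ((∫ x in (0:ℝ)..l, τ x ^ 2 * (-(Q x x))) + ∫ x in (0:ℝ)..l, h x * G x) := by
    rw [intervalIntegral.integral_add ((iττ'.const_mul γ₁).add ((iA.add iSP).const_mul γ₂))
        ((iB.add iSQ).const_mul γ₃),
      intervalIntegral.integral_add (iττ'.const_mul γ₁) ((iA.add iSP).const_mul γ₂),
      intervalIntegral.integral_const_mul, intervalIntegral.integral_const_mul,
      intervalIntegral.integral_const_mul,
      intervalIntegral.integral_add iA iSP, intervalIntegral.integral_add iB iSQ]
  -- conclude E = 0
  have hEnn : 0 ≤ E := intervalIntegral.integral_nonneg hll (fun u _ => mul_self_nonneg _)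
  have hkey : -(c * E) = γ₂ * ((∫ x in (0:ℝ)..l, τ x ^ 2 * P x x) + F l * F l / 2) +
      γ₃ * ((∫ x in (0:ℝ)..l, τ x ^ 2 * (-(Q x x))) + G 0 * G 0 / 2) := by
    rw [← hSP, ← hSQ, ← hLHS, hint_eq, hsplitR, hI1]; ring
  have hRHSnn : 0 ≤ -(c * E) := by
    rw [hkey]
    have := mul_self_nonneg (F l)
    have := mul_self_nonneg (G 0)
    have h1 : 0 ≤ (∫ x in (0:ℝ)..l, τ x ^ 2 * P x x) + F l * F l / 2 := by linarith
    have h2 : 0 ≤ (∫ x in (0:ℝ)..l, τ x ^ 2 * (-(Q x x))) + G 0 * G 0 / 2 := by linarith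
    exact add_nonneg (mul_nonneg hγ₂ h1) (mul_nonneg hγ₃ h2)
  have hE0 : E = 0 := by nlinarith
  -- from E = 0 deduce τ' = 0 a.e. on (0, l]
  have hae : τ' =ᵐ[volume.restrict (Ioc 0 l)] 0 := by
    have h10 := (intervalIntegral.integral_eq_zero_iff_of_le_of_nonneg_ae hll
      (Filter.Eventually.of_forall (fun x => mul_self_nonneg (τ' x))) iτ'τ').mp hE0
    filter_upwards [h10] with x hx
    exact mul_self_eq_zero.mp hx
  -- conclude
  intro x hx
  have hsub : Icc (0:ℝ) x ⊆ Icc 0 l := Icc_subset_Icc le_rfl hx.2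
  have hftc : ∫ y in (0:ℝ)..x, τ' y = τ x - τ 0 := by
    apply intervalIntegral.integral_eq_sub_of_hasDeriv_right_of_le hx.1 (hτc.mono hsub)
      (fun z hz => (hτat z ⟨hz.1, lt_of_lt_of_le hz.2 hx.2⟩).hasDerivWithinAt)
    apply ContinuousOn.intervalIntegrable
    rw [uIcc_of_le hx.1]
    exact hτ'c.mono hsub
  have hzero : (∫ y in (0:ℝ)..x, τ' y) = 0 := by
    rw [intervalIntegral.integral_of_le hx.1]
    have hae' : τ' =ᵐ[volume.restrict (Ioc 0 x)] 0 :=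
      ae_restrict_of_ae_restrict_of_subset (Ioc_subset_Ioc_right hx.2) hae
    rw [MeasureTheory.integral_congr_ae hae']
    simp
  rw [hzero, h0] at hftc
  linarith
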